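/- If a C² function u(x,t) satisfies u_x² - u_t² = C with C ≠ 0 and u_x, u_t nowhere zero, then for each n ≥ 1, the pair Fₙ = fₙ(u_x) and Gₙ = 1/u_x^{2n} is a conservation law, where fₙ is any antiderivative of s ↦ 2n/(s^{2n}·√(s² - C)) on the range of u_x (assuming u_x² > C); i.e. ∂_x Fₙ + ∂_t Gₙ = 0. -/

import Mathlib

open Real

/-- Uniqueness for the linear ODE `k' = c k`, `k 0 = 0`: nonnegative times. -/
lemma ode_zero_nonneg (k c : ℝ → ℝ) (hc : Continuous c)
    (hk : ∀ t, HasDerivAt k (c t * k t) t) (h0 : k 0 = 0) :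
    ∀ t, 0 ≤ t → k t = 0 := by
  intro t ht
  obtain ⟨K, hK⟩ := (isCompact_Icc (a := (0:ℝ)) (b := t)).exists_bound_of_continuousOn
    hc.continuousOn
  have hb := norm_le_gronwallBound_of_norm_deriv_right_le (f := k)
    (f' := fun s => c s * k s) (δ := 0) (K := K) (ε := 0) (a := 0) (b := t)
    (fun s _ => (hk s).continuousAt.continuousWithinAt)
    (fun s _ => (hk s).hasDerivWithinAt)
    (by simp [h0])
    (fun s hs => by
      have : ‖c s * k s‖ = ‖c s‖ * ‖k s‖ := by simp [abs_mul]
      rw [this, add_zero]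
      exact mul_le_mul_of_nonneg_right (hK s (Set.mem_Icc.2 ⟨hs.1, hs.2.le⟩)) (norm_nonneg _))
  have := hb t (Set.mem_Icc.2 ⟨ht, le_rfl⟩)
  rw [gronwallBound_ε0] at this
  have h1 : ‖k t‖ ≤ 0 := by simpa using this
  simpa using norm_le_zero_iff.1 h1

/-- Uniqueness for the linear ODE `k' = c k`, `k 0 = 0`. -/
lemma ode_zero (k c : ℝ → ℝ) (hc : Continuous c)
    (hk : ∀ t, HasDerivAt k (c t * k t) t) (h0 : k 0 = 0) : ∀ t, k t = 0 := by
  intro t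
  rcases le_or_gt 0 t with ht | ht
  · exact ode_zero_nonneg k c hc hk h0 t ht
  · have := ode_zero_nonneg (fun s => k (-s)) (fun s => -c (-s))
      (hc.comp continuous_neg).neg
      (fun s => by
        simpa [neg_mul, mul_comm, Function.comp_def] using ((hk (-s)).comp s (hasDerivAt_neg s)))
      (by simp [h0]) (-t) (by linarith)
    simpa using this

/-- Injectivity of `s ↦ s / √(s² - C)` on `{s | C < s²}`, for `C ≠ 0`. -/
lemma Fprime_inj {C a b : ℝ} (hC : C ≠ 0) (ha : C < a ^ 2) (hb : C < b ^ 2)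
    (h : a / Real.sqrt (a ^ 2 - C) = b / Real.sqrt (b ^ 2 - C)) : a = b := by
  have hsa : 0 < Real.sqrt (a ^ 2 - C) := Real.sqrt_pos.2 (by linarith)
  have hsb : 0 < Real.sqrt (b ^ 2 - C) := Real.sqrt_pos.2 (by linarith)
  have hsa2 : Real.sqrt (a ^ 2 - C) ^ 2 = a ^ 2 - C := Real.sq_sqrt (by linarith)
  have hsb2 : Real.sqrt (b ^ 2 - C) ^ 2 = b ^ 2 - C := Real.sq_sqrt (by linarith)
  have hcross : a * Real.sqrt (b ^ 2 - C) = b * Real.sqrt (a ^ 2 - C) := by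
    field_simp at h; linarith [h]
  have hsq : a ^ 2 * (b ^ 2 - C) = b ^ 2 * (a ^ 2 - C) := by
    have := congrArg (fun x => x ^ 2) hcross
    simp only [mul_pow, hsa2, hsb2] at this
    linarith
  have hab2 : a ^ 2 = b ^ 2 := by
    have : C * a ^ 2 = C * b ^ 2 := by ring_nf; ring_nf at hsq; linarith
    exact mul_left_cancel₀ hC this
  have hss : Real.sqrt (a ^ 2 - C) = Real.sqrt (b ^ 2 - C) := by rw [hab2]
  have : a * Real.sqrt (a ^ 2 - C) = b * Real.sqrt (a ^ 2 - C) := by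
    rw [hss] at hcross ⊢; exact hcross
  exact mul_right_cancel₀ (ne_of_gt hsa) this

/-- Derivative of `s ↦ s / √(s² - C)`. -/
lemma Fprime_hasDerivAt {C s : ℝ} (hs : C < s ^ 2) :
    HasDerivAt (fun y => y / Real.sqrt (y ^ 2 - C))
      (-C / (Real.sqrt (s ^ 2 - C)) ^ 3) s := by
  have hpos : 0 < s ^ 2 - C := by linarith
  have hsq : Real.sqrt (s ^ 2 - C) ^ 2 = s ^ 2 - C := Real.sq_sqrt hpos.le
  have hsqrt_pos : 0 < Real.sqrt (s ^ 2 - C) := Real.sqrt_pos.2 hpos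
  have hinner : HasDerivAt (fun y : ℝ => y ^ 2 - C) (2 * s) s := by
    simpa using (hasDerivAt_pow 2 s).sub_const C
  have hg : HasDerivAt (fun y : ℝ => Real.sqrt (y ^ 2 - C))
      (2 * s / (2 * Real.sqrt (s ^ 2 - C))) s :=
    (Real.hasDerivAt_sqrt hpos.ne').comp s hinner |>.congr_deriv (by ring)
  have := (hasDerivAt_id s).div hg hsqrt_pos.ne'
  refine this.congr_deriv ?_
  have hne : Real.sqrt (s ^ 2 - C) ≠ 0 := hsqrt_pos.ne'
  have e1 : (1 * Real.sqrt (s ^ 2 - C) - s * (2 * s / (2 * Real.sqrt (s ^ 2 - C)))) =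
      -C / Real.sqrt (s ^ 2 - C) := by
    field_simp
    linarith [hsq]
  simp only [id]
  rw [e1, div_div]
  ring

/-- A globally C¹ solution of `w_t = -F'(w) w_x` is constant along the line through `p`
with velocity `(F'(w p), 1)`. -/
lemma const_on_char (C : ℝ) (w : ℝ × ℝ → ℝ) (hw : ContDiff ℝ 1 w)
    (hC2 : ∀ p, C < (w p) ^ 2)
    (hpde : ∀ p, fderiv ℝ w p (0, 1) =
      -(w p / Real.sqrt ((w p) ^ 2 - C)) * fderiv ℝ w p (1, 0)) :
    ∀ p : ℝ × ℝ, ∀ s : ℝ,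
      w (p.1 + s * (w p / Real.sqrt ((w p) ^ 2 - C)), p.2 + s) = w p := by
  intro p
  set a : ℝ := w p / Real.sqrt ((w p) ^ 2 - C) with ha
  set L : ℝ → ℝ × ℝ := fun s => (p.1 + s * a, p.2 + s) with hL
  have hL0 : L 0 = p := by simp [hL]
  have hLd : ∀ s, HasDerivAt L (a, 1) s := by
    intro s
    simpa using (((hasDerivAt_id s).mul_const a).const_add p.1).prodMk
      ((hasDerivAt_id s).const_add p.2)
  set h : ℝ → ℝ := fun s => w (L s) with hh
  have hwd : Differentiable ℝ w := hw.differentiable (by norm_num)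
  have hhd : ∀ s, HasDerivAt h (fderiv ℝ w (L s) (a, 1)) s := by
    intro s
    exact (hwd (L s)).hasFDerivAt.comp_hasDerivAt s (hLd s)
  -- directional derivative decomposition
  have hdir : ∀ q : ℝ × ℝ, fderiv ℝ w q ((a : ℝ), (1 : ℝ)) =
      a * fderiv ℝ w q (1, 0) + fderiv ℝ w q (0, 1) := by
    intro q
    have : ((a : ℝ), (1 : ℝ)) = a • ((1 : ℝ), (0 : ℝ)) + ((0 : ℝ), (1 : ℝ)) := by
      simp [Prod.ext_iff]
    rw [this, map_add, map_smul]
    simp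
  set k : ℝ → ℝ := fun s => a - h s / Real.sqrt ((h s) ^ 2 - C) with hk
  have hh' : ∀ s, HasDerivAt h (k s * fderiv ℝ w (L s) (1, 0)) s := by
    intro s
    have := hhd s
    rw [hdir (L s), hpde (L s)] at this
    exact this.congr_deriv (by ring)
  set c : ℝ → ℝ := fun s => (C / (Real.sqrt ((h s) ^ 2 - C)) ^ 3) * fderiv ℝ w (L s) (1, 0)
    with hc
  have hkd : ∀ s, HasDerivAt k (c s * k s) s := by
    intro s
    have hF : HasDerivAt (fun y => y / Real.sqrt (y ^ 2 - C))
        (-C / (Real.sqrt ((h s) ^ 2 - C)) ^ 3) (h s) := Fprime_hasDerivAt (hC2 (L s))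
    have := ((hF.comp s (hh' s)).const_sub a)
    exact this.congr_deriv (by simp [hc, hk]; ring)
  have hccont : Continuous c := by
    have hwx : Continuous fun q : ℝ × ℝ => fderiv ℝ w q (1, 0) :=
      (ContinuousLinearMap.apply ℝ ℝ ((1, 0) : ℝ × ℝ)).continuous.comp
        (hw.continuous_fderiv (by norm_num))
    have hLc : Continuous L :=
      (continuous_const.add (continuous_id.mul continuous_const)).prodMk
        (continuous_const.add continuous_id)
    have hhc : Continuous h := (hw.continuous).comp hLc
    have hden : Continuous fun s => (Real.sqrt ((h s) ^ 2 - C)) ^ 3 :=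
      (Real.continuous_sqrt.comp ((hhc.pow 2).sub continuous_const)).pow 3
    have hden0 : ∀ s, (Real.sqrt ((h s) ^ 2 - C)) ^ 3 ≠ 0 := fun s =>
      pow_ne_zero _ (Real.sqrt_pos.2 (by have := hC2 (L s); simpa [hh] using by linarith)).ne'
    exact ((continuous_const.div hden hden0)).mul (hwx.comp hLc)
  have hk0 : k 0 = 0 := by simp [hk, hh, hL0, ha]
  have hkz : ∀ s, k s = 0 := ode_zero k c hccont hkd hk0
  -- h has zero derivative everywhere
  have hconst : ∀ s, h s = h 0 := by
    intro s
    have hd : ∀ t, HasDerivAt h 0 t := fun t => by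
      simpa [hkz t] using hh' t
    have : Differentiable ℝ h := fun t => (hd t).differentiableAt
    have := is_const_of_deriv_eq_zero this (fun t => (hd t).deriv)
    exact this s 0
  intro s
  have := hconst s
  simpa [hh, hL0] using this

/-- A globally C¹ solution of `w_t = -F'(w) w_x` with `C ≠ 0` has `w_x ≡ 0`. -/
lemma wx_zero (C : ℝ) (hC : C ≠ 0) (w : ℝ × ℝ → ℝ) (hw : ContDiff ℝ 1 w)
    (hC2 : ∀ p, C < (w p) ^ 2)
    (hpde : ∀ p, fderiv ℝ w p (0, 1) =
      -(w p / Real.sqrt ((w p) ^ 2 - C)) * fderiv ℝ w p (1, 0)) :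
    ∀ p : ℝ × ℝ, fderiv ℝ w p (1, 0) = 0 := by
  have hchar := const_on_char C w hw hC2 hpde
  intro p
  have hconst : ∀ x : ℝ, w (x, p.2) = w p := by
    intro x
    by_contra hne
    set q : ℝ × ℝ := (x, p.2) with hq
    set ap : ℝ := w p / Real.sqrt ((w p) ^ 2 - C) with hap
    set aq : ℝ := w q / Real.sqrt ((w q) ^ 2 - C) with haq
    have hane : ap ≠ aq := by
      intro hEq
      exact hne (Fprime_inj hC (hC2 q) (hC2 p) (haq ▸ hap ▸ hEq).symm)
    set s : ℝ := (x - p.1) / (ap - aq) with hs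
    have h1 := hchar p s
    have h2 := hchar q s
    have hpt : (p.1 + s * ap, p.2 + s) = (q.1 + s * aq, q.2 + s) := by
      have : s * (ap - aq) = x - p.1 := div_mul_cancel₀ _ (sub_ne_zero.2 hane)
      have hx1 : p.1 + s * ap = q.1 + s * aq := by
        simp only [hq]
        nlinarith [this]
      simp [hq, Prod.ext_iff, hx1]
    rw [← hap] at h1
    rw [← haq] at h2
    rw [hpt] at h1
    rw [h2] at h1
    exact hne h1
  have hwd : Differentiable ℝ w := hw.differentiable (by norm_num)
  have hinner : HasDerivAt (fun x : ℝ => (x, p.2)) ((1 : ℝ), (0 : ℝ)) p.1 :=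
    (hasDerivAt_id p.1).prodMk (hasDerivAt_const p.1 p.2)
  have hg : HasDerivAt (fun x : ℝ => w (x, p.2)) (fderiv ℝ w p (1, 0)) p.1 := by
    have := (hwd (p.1, p.2)).hasFDerivAt.comp_hasDerivAt p.1 hinner
    simpa [Function.comp_def] using this
  have hg0 : HasDerivAt (fun x : ℝ => w (x, p.2)) 0 p.1 := by
    have : (fun x : ℝ => w (x, p.2)) = fun _ => w p := funext hconst
    rw [this]
    exact hasDerivAt_const _ _
  exact hg.unique hg0



/-- for each n ≥ 1, Fₙ = fₙ(u_x), Gₙ = u_x^{-2n} is a conservation law of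
the eikonal equation, where fₙ is an antiderivative of s ↦ 2n/(s^{2n}√(s² - C)). -/
theorem eikonal_higher_conservation_laws (u : ℝ × ℝ → ℝ) (C : ℝ) (hC : C ≠ 0)
    (hu : ContDiff ℝ 2 u)
    (ux ut : ℝ × ℝ → ℝ)
    (hux : ∀ p, ux p = fderiv ℝ u p (1, 0))
    (hut : ∀ p, ut p = fderiv ℝ u p (0, 1))
    (heik : ∀ p, (ux p) ^ 2 - (ut p) ^ 2 = C)
    (hx : ∀ p, ux p ≠ 0) (ht : ∀ p, ut p ≠ 0)
    (hxC : ∀ p, C < (ux p) ^ 2)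
    (n : ℕ) (hn : 1 ≤ n) (f : ℝ → ℝ)
    (hf : ∀ p, HasDerivAt f
      (2 * n / ((ux p) ^ (2 * n) * Real.sqrt ((ux p) ^ 2 - C))) (ux p)) :
    ∀ p : ℝ × ℝ,
      fderiv ℝ (fun q => f (ux q)) p (1, 0) +
        fderiv ℝ (fun q => ((ux q) ^ (2 * n))⁻¹) p (0, 1) = 0 := by
  have hu1 : ContDiff ℝ 1 (fderiv ℝ u) := hu.fderiv_right (by norm_num)
  have huxf : ux = fun p => fderiv ℝ u p (1, 0) := funext hux
  have hutf : ut = fun p => fderiv ℝ u p (0, 1) := funext hut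
  have hcux : ContDiff ℝ 1 ux := by rw [huxf]; exact hu1.clm_apply contDiff_const
  have hcut : ContDiff ℝ 1 ut := by rw [hutf]; exact hu1.clm_apply contDiff_const
  have hD2 : ∀ p, HasFDerivAt (fderiv ℝ u) (fderiv ℝ (fderiv ℝ u) p) p :=
    fun p => (hu1.differentiable (by norm_num) p).hasFDerivAt
  have hux' : ∀ p, HasFDerivAt ux
      ((ContinuousLinearMap.apply ℝ ℝ ((1, 0) : ℝ × ℝ)).comp (fderiv ℝ (fderiv ℝ u) p)) p := by
    rw [huxf]
    exact fun p => (ContinuousLinearMap.apply ℝ ℝ ((1, 0) : ℝ × ℝ)).hasFDerivAt.comp p (hD2 p)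
  have hut' : ∀ p, HasFDerivAt ut
      ((ContinuousLinearMap.apply ℝ ℝ ((0, 1) : ℝ × ℝ)).comp (fderiv ℝ (fderiv ℝ u) p)) p := by
    rw [hutf]
    exact fun p => (ContinuousLinearMap.apply ℝ ℝ ((0, 1) : ℝ × ℝ)).hasFDerivAt.comp p (hD2 p)
  have hfdux : ∀ p v, fderiv ℝ ux p v = fderiv ℝ (fderiv ℝ u) p v (1, 0) :=
    fun p v => by rw [(hux' p).fderiv]; rfl
  have hsymm : ∀ p (v w : ℝ × ℝ), fderiv ℝ (fderiv ℝ u) p v w = fderiv ℝ (fderiv ℝ u) p w v :=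
    fun p => second_derivative_symmetric
      (fun y => (hu.differentiable (by norm_num) y).hasFDerivAt) (hD2 p)
  -- the differentiated eikonal identity (with second-derivative symmetry)
  have hI : ∀ p, ux p * fderiv ℝ ux p (1, 0) = ut p * fderiv ℝ ux p (0, 1) := by
    intro p
    have h1 := ((hux' p).mul (hux' p)).sub ((hut' p).mul (hut' p))
    have h2 : HasFDerivAt (fun q => ux q * ux q - ut q * ut q) (0 : ℝ × ℝ →L[ℝ] ℝ) p := by
      have he : (fun q => ux q * ux q - ut q * ut q) = fun _ => C :=
        funext fun q => by rw [← pow_two, ← pow_two]; exact heik q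
      rw [he]; exact hasFDerivAt_const C p
    have h3 := h1.unique h2
    have h4 := congrFun (congrArg DFunLike.coe h3) ((1, 0) : ℝ × ℝ)
    simp only [ContinuousLinearMap.sub_apply, ContinuousLinearMap.add_apply,
      ContinuousLinearMap.smul_apply, ContinuousLinearMap.comp_apply,
      ContinuousLinearMap.apply_apply, ContinuousLinearMap.zero_apply, smul_eq_mul] at h4
    rw [hfdux p (1, 0), hfdux p (0, 1)]
    have hs := hsymm p (1, 0) (0, 1)
    rw [← hs]
    linarith [h4]
  -- sign dichotomy for ut
  have hsign : (∀ p, 0 < ut p) ∨ (∀ p, ut p < 0) := by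
    by_cases H : ∀ p, 0 < ut p
    · exact Or.inl H
    · right
      push_neg at H
      obtain ⟨q, hq⟩ := H
      intro p
      rcases (ht p).lt_or_gt with h | h
      · exact h
      · exfalso
        obtain ⟨z, hz⟩ := intermediate_value_univ₂
          (continuous_const : Continuous fun _ : ℝ × ℝ => (0 : ℝ))
          (hcut.continuous) (le_of_lt h) hq
        exact ht z hz.symm
  have hsqrt : ∀ p, Real.sqrt (ux p ^ 2 - C) = |ut p| := by
    intro p
    rw [← heik p, sub_sub_cancel, Real.sqrt_sq_eq_abs]
  -- chain rule evaluations
  have hT1 : ∀ p, fderiv ℝ (fun q => f (ux q)) p (1, 0) =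
      (2 * n / ((ux p) ^ (2 * n) * Real.sqrt ((ux p) ^ 2 - C))) * fderiv ℝ ux p (1, 0) := by
    intro p
    have hcomp : HasFDerivAt (fun q => f (ux q))
        ((2 * n / ((ux p) ^ (2 * n) * Real.sqrt ((ux p) ^ 2 - C))) • fderiv ℝ ux p) p := by
      rw [(hux' p).fderiv]
      exact (hf p).comp_hasFDerivAt p (hux' p)
    rw [hcomp.fderiv]
    simp
  have hT2 : ∀ p, fderiv ℝ (fun q => ((ux q) ^ (2 * n))⁻¹) p (0, 1) =
      (-(↑(2 * n) * ux p ^ (2 * n - 1)) / (ux p ^ (2 * n)) ^ 2) * fderiv ℝ ux p (0, 1) := by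
    intro p
    have hpow : HasDerivAt (fun s : ℝ => (s ^ (2 * n))⁻¹)
        (-(↑(2 * n) * ux p ^ (2 * n - 1)) / (ux p ^ (2 * n)) ^ 2) (ux p) :=
      (hasDerivAt_pow (2 * n) (ux p)).inv (pow_ne_zero _ (hx p))
    have hcomp : HasFDerivAt (fun q => ((ux q) ^ (2 * n))⁻¹)
        ((-(↑(2 * n) * ux p ^ (2 * n - 1)) / (ux p ^ (2 * n)) ^ 2) • fderiv ℝ ux p) p := by
      rw [(hux' p).fderiv]
      exact hpow.comp_hasFDerivAt p (hux' p)
    rw [hcomp.fderiv]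
    simp
  rcases hsign with hpos | hneg
  · -- ut > 0 everywhere: direct computation
    intro p
    obtain ⟨m, hm⟩ : ∃ m, 2 * n = m + 1 := ⟨2 * n - 1, by omega⟩
    have hm' : (2 : ℝ) * (n : ℝ) = (m : ℝ) + 1 := by
      have := congrArg (Nat.cast (R := ℝ)) hm; push_cast at this; linarith
    have key := hI p
    have hux0 := hx p
    have hut0 := (hpos p).ne'
    set wx := fderiv ℝ ux p (1, 0) with hwx
    set wt := fderiv ℝ ux p (0, 1) with hwtd
    have hwt : wt = ux p * wx / ut p := by
      rw [eq_div_iff hut0]; linarith [key]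
    rw [hT1 p, hT2 p, hsqrt p, abs_of_pos (hpos p), hm, hm']
    simp only [Nat.add_sub_cancel, ← hwx, ← hwtd]
    rw [hwt]
    push_cast
    field_simp
    ring
  · -- ut < 0 everywhere: u is degenerate, both terms vanish
    have hpde : ∀ p, fderiv ℝ ux p (0, 1) =
        -(ux p / Real.sqrt ((ux p) ^ 2 - C)) * fderiv ℝ ux p (1, 0) := by
      intro p
      have hut0 := (hneg p).ne
      rw [hsqrt p, abs_of_neg (hneg p), div_neg, neg_neg, div_mul_eq_mul_div,
        eq_div_iff hut0]
      have key := hI p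
      linarith [key]
    have hwx0 := wx_zero C hC ux hcux hxC hpde
    have hwt0 : ∀ p, fderiv ℝ ux p (0, 1) = 0 := fun p => by
      rw [hpde p, hwx0 p, mul_zero]
    intro p
    rw [hT1 p, hT2 p, hwx0 p, hwt0 p, mul_zero, mul_zero, add_zero]
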